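/- Let W be a finite set of workers equipped with a total preorder ≼, let jobs arrive sequentially, and suppose each arriving job i has a feasible worker set Fᵢ ⊆ W that is upward closed with respect to ≼ (if w ∈ Fᵢ and w ≼ w' then w' ∈ Fᵢ). Consider the online greedy policy that assigns each arriving job to a ≼-minimal element of Fᵢ among the workers not yet assigned, and rejects the job if Fᵢ contains no unassigned worker. Then the matching produced by any run of this greedy policy has maximum cardinality among all matchings of jobs to workers in which each job i is matched only to workers in Fᵢ. -/

import Mathlib

/-!
STATEMENT 3 (abstract combinatorial core of the SSTAP optimality theorem): given a
total preorder `r` on a finite set `W` of workers, and sequentially arriving jobs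
whose feasible sets `F i ⊆ W` are upward closed with respect to `r`, any run of the
online greedy policy (assign each arriving job to an `r`-minimal feasible worker
among those not yet assigned, reject when none exists) yields a matching of maximum
cardinality among all matchings in which each job `i` is matched only to workers in
`F i`.
-/

theorem greedy_max_matching_total_preorder
    {W : Type*} [Fintype W] [DecidableEq W] {m : ℕ}
    (r : W → W → Prop)
    (hrefl : ∀ w, r w w)
    (htrans : ∀ a b c, r a b → r b c → r a c)
    (htotal : ∀ a b, r a b ∨ r b a)
    (F : Fin m → Set W)
    -- each feasible set is upward closed with respect to `r`:
    (hup : ∀ i w w', w ∈ F i → r w w' → w' ∈ F i)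
    (A : Fin m → Option W)
    -- `A` is a run of the greedy policy:
    (hA : ∀ i : Fin m,
      (∀ w, A i = some w →
        w ∈ F i ∧ (∀ i' < i, A i' ≠ some w) ∧
          ∀ w', w' ∈ F i → (∀ i' < i, A i' ≠ some w') → r w w') ∧
      (A i = none → ∀ w ∈ F i, ∃ i' < i, A i' = some w)) :
    -- the greedy matching has maximum cardinality among all feasible matchings:
    ∀ B : Fin m → Option W,
      (∀ i i' w, B i = some w → B i' = some w → i = i') →
      (∀ i w, B i = some w → w ∈ F i) →
      (Finset.univ.filter (fun i => B i ≠ none)).card ≤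
        (Finset.univ.filter (fun i => A i ≠ none)).card := by
  classical
  intro B hBinj hBfeas
  -- injectivity of A on matched jobs
  have hAinj : ∀ i i' w, A i = some w → A i' = some w → i = i' := by
    intro i i' w h h'
    rcases lt_trichotomy i i' with h1 | h1 | h1
    · exact absurd h (((hA i').1 w h').2.1 i h1)
    · exact h1
    · exact absurd h' (((hA i).1 w h).2.1 i' h1)
  -- counting function
  let cnt : (Fin m → Option W) → ℕ → Set W → ℕ :=
    fun C k D =>
      (Finset.univ.filter (fun i : Fin m => i.val < k ∧ ∃ w ∈ D, C i = some w)).card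
  -- step lemma
  have hstep : ∀ (C : Fin m → Option W) (k : ℕ) (hk : k < m) (D : Set W),
      cnt C (k+1) D = cnt C k D + (if ∃ w ∈ D, C ⟨k, hk⟩ = some w then 1 else 0) := by
    intro C k hk D
    have hiff : ∀ i : Fin m,
        ((i.val < k + 1 ∧ ∃ w ∈ D, C i = some w)) ↔
        ((i.val < k ∧ ∃ w ∈ D, C i = some w) ∨
          (i = ⟨k, hk⟩ ∧ ∃ w ∈ D, C ⟨k, hk⟩ = some w)) := by
      intro i
      constructor
      · rintro ⟨hlt, hw⟩
        rcases Nat.lt_succ_iff_lt_or_eq.mp hlt with h | h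
        · exact Or.inl ⟨h, hw⟩
        · right
          have : i = (⟨k, hk⟩ : Fin m) := Fin.ext h
          exact ⟨this, this ▸ hw⟩
      · rintro (⟨hlt, hw⟩ | ⟨hi, hw⟩)
        · exact ⟨Nat.lt_succ_of_lt hlt, hw⟩
        · exact ⟨by simp [hi], hi ▸ hw⟩
    show (Finset.univ.filter _).card = _
    rw [Finset.filter_congr (fun i _ => hiff i), Finset.filter_or,
      Finset.card_union_of_disjoint]
    · congr 1
      by_cases hP : ∃ w ∈ D, C ⟨k, hk⟩ = some w
      · rw [if_pos hP]
        have : (Finset.univ.filter (fun i : Fin m => i = ⟨k, hk⟩ ∧ ∃ w ∈ D, C ⟨k, hk⟩ = some w))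
            = {⟨k, hk⟩} := by
          ext i; simp [hP]
        rw [this, Finset.card_singleton]
      · rw [if_neg hP]
        have : (Finset.univ.filter (fun i : Fin m => i = ⟨k, hk⟩ ∧ ∃ w ∈ D, C ⟨k, hk⟩ = some w))
            = ∅ := by
          ext i; simp [hP]
        rw [this, Finset.card_empty]
    · rw [Finset.disjoint_filter]
      rintro i _ ⟨hlt, -⟩ ⟨hi, -⟩
      rw [hi] at hlt
      exact lt_irrefl k hlt
  -- split lemma
  have hsplit : ∀ (C : Fin m → Option W) (k : ℕ) (D D' D'' : Set W),
      (∀ u, u ∈ D ↔ u ∈ D' ∨ u ∈ D'') → (∀ u, u ∈ D' → u ∈ D'' → False) →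
      cnt C k D = cnt C k D' + cnt C k D'' := by
    intro C k D D' D'' hcov hdis
    have hiff : ∀ i : Fin m,
        (i.val < k ∧ ∃ w ∈ D, C i = some w) ↔
        ((i.val < k ∧ ∃ w ∈ D', C i = some w) ∨ (i.val < k ∧ ∃ w ∈ D'', C i = some w)) := by
      intro i
      constructor
      · rintro ⟨hlt, w, hwD, hw⟩
        rcases (hcov w).mp hwD with h | h
        · exact Or.inl ⟨hlt, w, h, hw⟩
        · exact Or.inr ⟨hlt, w, h, hw⟩
      · rintro (⟨hlt, w, hwD, hw⟩ | ⟨hlt, w, hwD, hw⟩)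
        · exact ⟨hlt, w, (hcov w).mpr (Or.inl hwD), hw⟩
        · exact ⟨hlt, w, (hcov w).mpr (Or.inr hwD), hw⟩
    show (Finset.univ.filter _).card = _
    rw [Finset.filter_congr (fun i _ => hiff i), Finset.filter_or,
      Finset.card_union_of_disjoint]
    rw [Finset.disjoint_filter]
    rintro i _ ⟨hlt, w, hwD, hw⟩ ⟨-, w', hwD', hw'⟩
    rw [hw] at hw'
    exact hdis w hwD (Option.some_injective _ hw' ▸ hwD')
  -- lower bound for A on a set covered by A's early assignments
  have hAle : ∀ (S : Set W) (k : ℕ),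
      (∀ u ∈ S, ∃ i : Fin m, i.val < k ∧ A i = some u) →
      (Finset.univ.filter (fun u => u ∈ S)).card ≤ cnt A k S := by
    intro S k hcov
    rcases Nat.eq_zero_or_pos m with hm | hm
    · have hS : ∀ u, u ∉ S := by
        intro u hu
        obtain ⟨i, -, -⟩ := hcov u hu
        exact absurd i.isLt (by omega)
      have : (Finset.univ.filter (fun u => u ∈ S)) = ∅ := by
        ext u; simp [hS u]
      rw [this]
      simp
    apply Finset.card_le_card_of_injOn (fun u => if h : ∃ i : Fin m, i.val < k ∧ A i = some u
        then h.choose else ⟨0, hm⟩)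
    · intro u hu
      have huS : u ∈ S := (Finset.mem_filter.mp hu).2
      have h := hcov u huS
      simp only [Finset.mem_coe]
      rw [dif_pos h]
      rcases h.choose_spec with ⟨hlt, hsome⟩
      exact Finset.mem_filter.mpr ⟨Finset.mem_univ _, hlt, u, huS, hsome⟩
    · intro u hu u' hu' heq
      have huS : u ∈ S := by simpa using hu
      have huS' : u' ∈ S := by simpa using hu'
      have h := hcov u huS
      have h' := hcov u' huS'
      have heq' : h.choose = h'.choose := by simpa [dif_pos h, dif_pos h'] using heq
      have h1 := h.choose_spec.2
      have h2 := h'.choose_spec.2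
      rw [heq', h2] at h1
      exact (Option.some_injective _ h1).symm
  -- upper bound for B when a specific element of S is not used by B before k
  have hBle : ∀ (S : Set W) (k : ℕ) (w : W), w ∈ S →
      (∀ i : Fin m, i.val < k → B i ≠ some w) →
      cnt B k S + 1 ≤ (Finset.univ.filter (fun u => u ∈ S)).card := by
    intro S k w hwS hwun
    have hle : cnt B k S ≤ ((Finset.univ.filter (fun u => u ∈ S)).erase w).card := by
      apply Finset.card_le_card_of_injOn (fun i => (B i).getD w)
      · intro i hi
        obtain ⟨hlt, u, huS, hu⟩ := (Finset.mem_filter.mp hi).2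
        simp only [Finset.mem_coe]
        rw [hu]
        refine Finset.mem_erase.mpr ⟨?_, Finset.mem_filter.mpr ⟨Finset.mem_univ _, huS⟩⟩
        intro he
        exact hwun i hlt (he ▸ hu)
      · intro i hi i' hi' heq
        obtain ⟨hlt, u, huS, hu⟩ : i.val < k ∧ ∃ w ∈ S, B i = some w := by simpa using hi
        obtain ⟨hlt', u', huS', hu'⟩ : i'.val < k ∧ ∃ w ∈ S, B i' = some w := by
          simpa using hi'
        simp only [hu, hu', Option.getD_some] at heq
        exact hBinj i i' u hu (heq ▸ hu')
    have hmem : w ∈ Finset.univ.filter (fun u => u ∈ S) :=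
      Finset.mem_filter.mpr ⟨Finset.mem_univ _, hwS⟩
    have := Finset.card_erase_add_one hmem
    omega
  -- main invariant
  have main : ∀ (k : ℕ) (D : Set W), (∀ u ∈ D, ∀ u', r u' u → u' ∈ D) →
      cnt B k D ≤ cnt A k D := by
    intro k
    induction k with
    | zero =>
      intro D _
      simp [cnt]
    | succ k ih =>
      intro D hD
      by_cases hk : k < m
      · rw [hstep B k hk D, hstep A k hk D]
        set j : Fin m := ⟨k, hk⟩ with hj
        by_cases hBj : ∃ w ∈ D, B j = some w
        · by_cases hAj : ∃ w ∈ D, A j = some w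
          · rw [if_pos hBj, if_pos hAj]
            exact Nat.add_le_add_right (ih D hD) 1
          · rw [if_pos hBj, if_neg hAj]
            obtain ⟨w, hwD, hBw⟩ := hBj
            have hwF : w ∈ F j := hBfeas j w hBw
            set D' : Set W := {u | u ∈ D ∧ ¬ r w u} with hD'
            set D'' : Set W := {u | u ∈ D ∧ r w u} with hD''
            have hcov : ∀ u, u ∈ D ↔ u ∈ D' ∨ u ∈ D'' := by
              intro u
              constructor
              · intro hu
                by_cases hr : r w u
                · exact Or.inr ⟨hu, hr⟩
                · exact Or.inl ⟨hu, hr⟩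
              · rintro (h | h) <;> exact h.1
            have hdis : ∀ u, u ∈ D' → u ∈ D'' → False := fun u h h' => h.2 h'.2
            rw [hsplit B k D D' D'' hcov hdis, hsplit A k D D' D'' hcov hdis]
            -- D' is down-closed
            have hD'dc : ∀ u ∈ D', ∀ u', r u' u → u' ∈ D' := by
              rintro u ⟨huD, hur⟩ u' hru
              refine ⟨hD u huD u' hru, fun hwu' => hur (htrans w u' u hwu' hru)⟩
            have h1 : cnt B k D' ≤ cnt A k D' := ih D' hD'dc
            -- every element of D'' is assigned by A before k
            have hcover'' : ∀ u ∈ D'', ∃ i : Fin m, i.val < k ∧ A i = some u := by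
              rintro u ⟨huD, hru⟩
              have huF : u ∈ F j := hup j w u hwF hru
              cases hAcase : A j with
              | none =>
                obtain ⟨i', hi', hsome⟩ := (hA j).2 hAcase u huF
                exact ⟨i', hi', hsome⟩
              | some v =>
                have hvD : v ∉ D := fun hv => hAj ⟨v, hv, hAcase⟩
                by_contra hnone
                push_neg at hnone
                have hun : ∀ i' < j, A i' ≠ some u := by
                  intro i' hi' heq
                  exact hnone i' hi' heq
                have hrvu : r v u := (((hA j).1 v hAcase).2.2) u huF hun
                exact hvD (hD u huD v hrvu)
            have hwun : ∀ i : Fin m, i.val < k → B i ≠ some w := by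
              intro i hi heq
              have : i = j := hBinj i j w heq hBw
              rw [this] at hi
              exact lt_irrefl k hi
            have hw'' : w ∈ D'' := ⟨hwD, hrefl w⟩
            have h2 : cnt B k D'' + 1 ≤ cnt A k D'' :=
              le_trans (hBle D'' k w hw'' hwun) (hAle D'' k hcover'')
            omega
        · rw [if_neg hBj]
          have := ih D hD
          split_ifs <;> omega
      · -- k ≥ m : nothing changes
        have heq : ∀ (C : Fin m → Option W), cnt C (k+1) D = cnt C k D := by
          intro C
          show (Finset.univ.filter _).card = (Finset.univ.filter _).card
          congr 1
          apply Finset.filter_congr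
          intro i _
          have him : i.val < m := i.isLt
          constructor
          · rintro ⟨-, hw⟩; exact ⟨by omega, hw⟩
          · rintro ⟨-, hw⟩; exact ⟨by omega, hw⟩
        rw [heq B, heq A]
        exact ih D hD
  -- conclude
  have key := main m Set.univ (fun u _ u' _ => Set.mem_univ u')
  refine le_trans (le_trans (Finset.card_le_card ?_) key) (Finset.card_le_card ?_)
  · intro i hi
    simp only [Finset.mem_filter] at hi ⊢
    refine ⟨hi.1, i.isLt, ?_⟩
    cases hc : B i with
    | none => exact absurd hc hi.2
    | some v => exact ⟨v, Set.mem_univ v, rfl⟩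
  · intro i hi
    simp only [Finset.mem_filter] at hi ⊢
    obtain ⟨hu, -, w, -, hw⟩ := hi
    exact ⟨hu, by simp [hw]⟩
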